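/- Let Q be a prime power, β ∈ F_{Q^2} with β^{Q+1} = 1, and δ ∈ F_{Q^2} \ F_Q. Then the map x ↦ (δx - βδ^Q)/(x - β) induces a bijection from μ_{Q+1} \ {β} onto F_Q. (Here F_Q is viewed as a subfield of F_{Q^2}.) -/

import Mathlib

theorem stmt_3 (p e Q : ℕ) (hp : p.Prime) (he : 0 < e) (hQ : Q = p ^ e)
    (F : Type*) [Field F] [Fintype F] (hF : Fintype.card F = Q ^ 2)
    (β δ : F) (hβ : β ^ (Q + 1) = 1) (hδ : δ ^ Q ≠ δ) :
    Set.BijOn (fun x => (δ * x - β * δ ^ Q) / (x - β))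
      ({x : F | x ^ (Q + 1) = 1} \ {β}) {x : F | x ^ Q = x} := by
  have hpf : Fact p.Prime := ⟨hp⟩
  have hchar : CharP F p := by
    obtain ⟨n, hq, hcard⟩ := FiniteField.card F (ringChar F)
    have h1 : (ringChar F) ^ (n : ℕ) = p ^ (e * 2) := by
      rw [← hcard, hF, hQ, ← pow_mul]
    have hdvd : ringChar F ∣ p := by
      refine hq.dvd_of_dvd_pow (n := e * 2) ?_
      rw [← h1]
      exact dvd_pow_self _ n.ne_zero
    have : ringChar F = p := (Nat.prime_dvd_prime_iff_eq hq hp).mp hdvd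
    exact this ▸ ringChar.charP F
  have hsub : ∀ a b : F, (a - b) ^ Q = a ^ Q - b ^ Q := fun a b => by
    rw [hQ]; exact sub_pow_char_pow a b e
  have hQQ : ∀ x : F, (x ^ Q) ^ Q = x := fun x => by
    rw [← pow_mul, ← pow_two, ← hF, FiniteField.pow_card]
  have hβ0 : β ≠ 0 := by
    intro h; rw [h, zero_pow (Nat.succ_ne_zero Q)] at hβ; exact zero_ne_one hβ
  have hβQ : β ^ Q * β = 1 := by rw [← pow_succ]; exact hβ
  have hδQδ : δ ^ Q - δ ≠ 0 := sub_ne_zero.mpr hδ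
  refine ⟨?_, ?_, ?_⟩
  · -- MapsTo
    rintro x ⟨hx1, hx2⟩
    simp only [Set.mem_setOf_eq] at hx1 ⊢
    have hx2' : x ≠ β := hx2
    have hx0 : x ≠ 0 := by
      intro h; rw [h, zero_pow (Nat.succ_ne_zero Q)] at hx1; exact zero_ne_one hx1
    have hxQ : x ^ Q * x = 1 := by rw [← pow_succ]; exact hx1
    have hxβ : x - β ≠ 0 := sub_ne_zero.mpr hx2'
    have hxβQ : x ^ Q - β ^ Q ≠ 0 := by
      rw [← hsub]; exact pow_ne_zero _ hxβ
    show ((δ * x - β * δ ^ Q) / (x - β)) ^ Q = (δ * x - β * δ ^ Q) / (x - β)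
    rw [div_pow, hsub, mul_pow, mul_pow, hQQ δ, hsub]
    rw [div_eq_div_iff hxβQ hxβ]
    linear_combination (δ ^ Q - δ) * hxQ + (δ - δ ^ Q) * hβQ
  · -- InjOn
    rintro x ⟨hx1, hx2⟩ y ⟨hy1, hy2⟩ hxy
    simp only [Set.mem_setOf_eq] at hx1 hy1
    have hxβ : x - β ≠ 0 := sub_ne_zero.mpr hx2
    have hyβ : y - β ≠ 0 := sub_ne_zero.mpr hy2
    simp only at hxy
    rw [div_eq_div_iff hxβ hyβ] at hxy
    have key : β * (δ ^ Q - δ) * (x - y) = 0 := by linear_combination hxy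
    rcases mul_eq_zero.mp key with h | h
    · exact absurd (mul_eq_zero.mp h) (by push_neg; exact ⟨hβ0, hδQδ⟩)
    · exact sub_eq_zero.mp h
  · -- SurjOn
    rintro y hy
    simp only [Set.mem_setOf_eq] at hy
    have hδy : δ - y ≠ 0 := by
      refine sub_ne_zero.mpr fun h => hδ ?_
      rw [h, hy]
    have hδQy : δ ^ Q - y ≠ 0 := by
      refine sub_ne_zero.mpr fun h => hδ ?_
      have : δ = y := by rw [← hQQ δ, h, hy]
      rw [h, this]
    set x := β * (δ ^ Q - y) / (δ - y) with hxdef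
    have hxeq : x * (δ - y) = β * (δ ^ Q - y) := by
      rw [hxdef, div_mul_cancel₀ _ hδy]
    have hxQ : x ^ Q = β ^ Q * (δ - y) / (δ ^ Q - y) := by
      rw [hxdef, div_pow, mul_pow, hsub, hQQ δ, hy, hsub, hy]
    have hxβ : x ≠ β := by
      intro h
      apply hδ
      have := hxeq
      rw [h] at this
      have h3 : β * (δ ^ Q - δ) = 0 := by linear_combination -this
      rcases mul_eq_zero.mp h3 with h4 | h4
      · exact absurd h4 hβ0
      · linear_combination h4
    refine ⟨x, ⟨?_, hxβ⟩, ?_⟩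
    · show x ^ (Q + 1) = 1
      rw [pow_succ, hxQ, hxdef]
      field_simp
      linear_combination hβQ
    · show (δ * x - β * δ ^ Q) / (x - β) = y
      rw [div_eq_iff (sub_ne_zero.mpr hxβ)]
      linear_combination hxeq
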